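/- For m ≥ 0 and even d ≥ 4, with n = m+d+1, the total vertex count ∑_{k=0}^{d/2} C(k+m, m) + ∑_{k=0}^{(d-2)/2} C(k+m, m) equals C(n - d/2, d/2) + C(n - 1 - d/2, d/2 - 1). -/
import Mathlib

/-- For `m ≥ 0` and even `d ≥ 4`, with `n = m + d + 1`, the total vertex count
`∑_{k=0}^{d/2} C(k+m, m) + ∑_{k=0}^{(d-2)/2} C(k+m, m)` equals
`C(n - d/2, d/2) + C(n - 1 - d/2, d/2 - 1)`. -/
theorem stmt_3 (m d n : ℕ) (hd : Even d) (hd4 : 4 ≤ d) (hn : n = m + d + 1) :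
    (∑ k ∈ Finset.range (d / 2 + 1), (k + m).choose m) +
      (∑ k ∈ Finset.range ((d - 2) / 2 + 1), (k + m).choose m) =
      (n - d / 2).choose (d / 2) + (n - 1 - d / 2).choose (d / 2 - 1) := by
  obtain ⟨e, rfl⟩ := hd
  have he : 2 ≤ e := by omega
  have h1 : (e + e) / 2 = e := by omega
  have h2 : (e + e - 2) / 2 = e - 1 := by omega
  rw [h1, h2, Nat.sum_range_add_choose, Nat.sum_range_add_choose]
  have h3 : n - e = m + e + 1 := by omega
  have h4 : n - 1 - e = m + e := by omega
  rw [h3, h4]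
  congr 1
  · rw [show e + m + 1 = m + e + 1 by omega, ← Nat.choose_symm (by omega : m + 1 ≤ m + e + 1),
      show m + e + 1 - (m + 1) = e by omega]
  · rw [show e - 1 + m + 1 = m + e by omega, ← Nat.choose_symm (by omega : m + 1 ≤ m + e),
      show m + e - (m + 1) = e - 1 by omega]
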